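/- Let u : ℤ² → ℂ be such that u(k+1,ℓ) ≠ u(k,ℓ), u(k,ℓ+1) ≠ u(k,ℓ) and u(k+1,ℓ+1) ≠ u(k,ℓ) for all (k,ℓ) ∈ ℤ² (nonzero differences along all lattice edges), and such that at every vertex (k,ℓ) the hexagon condition M(u(k+1,ℓ), u(k+1,ℓ+1), u(k,ℓ+1), u(k−1,ℓ), u(k−1,ℓ−1), u(k,ℓ−1)) = −1 holds. Then for every p, q ∈ ℂ there exists exactly one map v : ℤ² → ℂ with v(0,0) = p and v(1,0) = q such that relations (A) and (B) hold at every (k,ℓ) ∈ ℤ². Moreover, if p ≠ q, then v has nonzero differences along all lattice edges and v itself satisfies the hexagon condition M(v(k+1,ℓ), v(k+1,ℓ+1), v(k,ℓ+1), v(k−1,ℓ), v(k−1,ℓ−1), v(k,ℓ−1)) = −1 at every vertex. -/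

import Mathlib

/-- The multi-ratio of six complex numbers. -/
noncomputable def multiRatio (w₁ w₂ w₃ w₄ w₅ w₆ : ℂ) : ℂ :=
  ((w₁ - w₂) * (w₃ - w₄) * (w₅ - w₆)) / ((w₂ - w₃) * (w₄ - w₅) * (w₆ - w₁))

/-- The hexagon condition `MR = -1` at every vertex of the triangular lattice,
modeled on `ℤ²`. -/
def HexagonCondition (u : ℤ → ℤ → ℂ) : Prop :=
  ∀ k l : ℤ, multiRatio (u (k+1) l) (u (k+1) (l+1)) (u k (l+1))
      (u (k-1) l) (u (k-1) (l-1)) (u k (l-1)) = -1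

/-- Nonzero differences along all edges of the triangular lattice. -/
def EdgesNondegenerate (u : ℤ → ℤ → ℂ) : Prop :=
  ∀ k l : ℤ, u (k+1) l ≠ u k l ∧ u k (l+1) ≠ u k l ∧ u (k+1) (l+1) ≠ u k l

/-- The fgh-system in potential form: relations (A) and (B) on every
elementary cell. -/
def FghRelations (u v : ℤ → ℤ → ℂ) : Prop :=
  ∀ k l : ℤ,
    (u (k+1) l - u k l) * (v k l - v (k+1) (l+1))
      = (u (k+1) (l+1) - u (k+1) l) * (v (k+1) (l+1) - v (k+1) l) ∧
    (u (k+1) (l+1) - u k (l+1)) * (v k (l+1) - v k l)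
      = (u k l - u (k+1) (l+1)) * (v k l - v (k+1) (l+1))

namespace FghAux


noncomputable def zprod (t : ℤ → ℂ) : ℤ → ℂ
  | .ofNat n => ∏ j ∈ Finset.range n, t j
  | .negSucc n => (∏ j ∈ Finset.range (n+1), t (Int.negSucc j))⁻¹

noncomputable def zsum (t : ℤ → ℂ) : ℤ → ℂ
  | .ofNat n => ∑ j ∈ Finset.range n, t j
  | .negSucc n => -∑ j ∈ Finset.range (n+1), t (Int.negSucc j)

@[simp] lemma zprod_zero (t : ℤ → ℂ) : zprod t 0 = 1 := by
  show zprod t (.ofNat 0) = 1; simp [zprod]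

@[simp] lemma zsum_zero (t : ℤ → ℂ) : zsum t 0 = 0 := by
  show zsum t (.ofNat 0) = 0; simp [zsum]

lemma zprod_succ (t : ℤ → ℂ) (ht : ∀ m, t m ≠ 0) (n : ℤ) :
    zprod t (n + 1) = t n * zprod t n := by
  cases n with
  | ofNat m =>
      show zprod t (.ofNat (m+1)) = t (.ofNat m) * zprod t (.ofNat m)
      simp [zprod, Finset.prod_range_succ, mul_comm]
  | negSucc m =>
      cases m with
      | zero =>
          show zprod t 0 = t (.negSucc 0) * zprod t (.negSucc 0)
          simp [zprod, mul_inv_cancel₀ (ht _)]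
      | succ m =>
          show zprod t (.negSucc m) = t (.negSucc (m+1)) * zprod t (.negSucc (m+1))
          simp only [zprod, Finset.prod_range_succ]
          have h1 := ht (Int.negSucc m)
          have h2 := ht (Int.negSucc (m+1))
          have h3 : (∏ j ∈ Finset.range m, t (Int.negSucc j)) ≠ 0 :=
            Finset.prod_ne_zero_iff.2 fun j _ => ht _
          field_simp

lemma zsum_succ (t : ℤ → ℂ) (n : ℤ) :
    zsum t (n + 1) = zsum t n + t n := by
  cases n with
  | ofNat m =>
      show zsum t (.ofNat (m+1)) = zsum t (.ofNat m) + t (.ofNat m)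
      simp [zsum, Finset.sum_range_succ]
  | negSucc m =>
      cases m with
      | zero =>
          show zsum t 0 = zsum t (.negSucc 0) + t (.negSucc 0)
          simp [zsum]
      | succ m =>
          show zsum t (.negSucc m) = zsum t (.negSucc (m+1)) + t (.negSucc (m+1))
          simp only [zsum, Finset.sum_range_succ]
          ring

lemma zprod_ne_zero (t : ℤ → ℂ) (ht : ∀ m, t m ≠ 0) (n : ℤ) : zprod t n ≠ 0 := by
  cases n with
  | ofNat m => exact Finset.prod_ne_zero_iff.2 fun j _ => ht _
  | negSucc m => exact inv_ne_zero (Finset.prod_ne_zero_iff.2 fun j _ => ht _)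


variable (u : ℤ → ℤ → ℂ)

noncomputable def aa (k l : ℤ) : ℂ := u (k+1) l - u k l
noncomputable def ee (k l : ℤ) : ℂ := u k (l+1) - u k l
noncomputable def dd (k l : ℤ) : ℂ := u (k+1) (l+1) - u k l
noncomputable def ff (k l : ℤ) : ℂ :=
  -(aa u (k+1) (l+1) * aa u k l) / (dd u (k+1) l * ee u (k+1) l)
noncomputable def gg (k l : ℤ) : ℂ :=
  -(ee u (k+1) (l+1) * ee u k l) / (dd u k (l+1) * aa u k (l+1))

variable {u}

lemma aa_ne (hu : EdgesNondegenerate u) (k l : ℤ) : aa u k l ≠ 0 :=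
  sub_ne_zero.2 (hu k l).1
lemma ee_ne (hu : EdgesNondegenerate u) (k l : ℤ) : ee u k l ≠ 0 :=
  sub_ne_zero.2 (hu k l).2.1
lemma dd_ne (hu : EdgesNondegenerate u) (k l : ℤ) : dd u k l ≠ 0 :=
  sub_ne_zero.2 (hu k l).2.2

lemma ff_ne (hu : EdgesNondegenerate u) (k l : ℤ) : ff u k l ≠ 0 := by
  unfold ff
  exact div_ne_zero (neg_ne_zero.2 (mul_ne_zero (aa_ne hu _ _) (aa_ne hu _ _)))
    (mul_ne_zero (dd_ne hu _ _) (ee_ne hu _ _))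

lemma gg_ne (hu : EdgesNondegenerate u) (k l : ℤ) : gg u k l ≠ 0 := by
  unfold gg
  exact div_ne_zero (neg_ne_zero.2 (mul_ne_zero (ee_ne hu _ _) (ee_ne hu _ _)))
    (mul_ne_zero (dd_ne hu _ _) (aa_ne hu _ _))

lemma hexId (hu : EdgesNondegenerate u) (hhex : HexagonCondition u) (k l : ℤ) :
    ee u (k+2) (l+1) * dd u k (l+1) * aa u k l
      = aa u (k+1) (l+2) * ee u k l * dd u (k+1) l := by
  have h := hhex (k+1) (l+1)
  simp only [add_sub_cancel_right, multiRatio,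
    show k+1+1 = k+2 from by ring, show l+1+1 = l+2 from by ring] at h
  have h1 : u (k+2) (l+2) - u (k+1) (l+2) ≠ 0 := by
    have := aa_ne hu (k+1) (l+2); unfold aa at this
    rwa [show k+1+1 = k+2 from by ring] at this
  have h2 : u k (l+1) - u k l ≠ 0 := ee_ne hu k l
  have h3 : u (k+1) l - u (k+2) (l+1) ≠ 0 := by
    have := dd_ne hu (k+1) l; unfold dd at this
    rw [show k+1+1 = k+2 from by ring] at this
    intro hz; exact this (by linear_combination -hz)
  rw [div_eq_iff (mul_ne_zero (mul_ne_zero h1 h2) h3)] at h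
  unfold aa ee dd
  rw [show k+1+1 = k+2 from by ring, show l+1+1 = l+2 from by ring]
  linear_combination h

lemma comm (hu : EdgesNondegenerate u) (hhex : HexagonCondition u) (k l : ℤ) :
    ff u k (l+1) * gg u k l = gg u (k+1) l * ff u k l := by
  have hx := hexId hu hhex k l
  unfold ff gg
  rw [show k+1+1 = k+2 from by ring, show l+1+1 = l+2 from by ring]
  rw [div_mul_div_comm, div_mul_div_comm, div_eq_div_iff
    (mul_ne_zero (mul_ne_zero (dd_ne hu _ _) (ee_ne hu _ _))
      (mul_ne_zero (dd_ne hu _ _) (aa_ne hu _ _)))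
    (mul_ne_zero (mul_ne_zero (dd_ne hu _ _) (aa_ne hu _ _))
      (mul_ne_zero (dd_ne hu _ _) (ee_ne hu _ _)))]
  linear_combination (-(aa u k (l+1) * ee u (k+1) (l+1) * dd u (k+1) (l+1) *
    aa u (k+1) (l+1) * ee u (k+1) l)) * hx

variable (u)

noncomputable def x0 (p q : ℂ) : ℂ := (q - p) * ee u 1 0 / dd u 0 0

noncomputable def xx (p q : ℂ) (k l : ℤ) : ℂ :=
  x0 u p q * zprod (fun j => ff u j 0) k * zprod (fun j => gg u k j) l

variable {u}

lemma xx_g (hu : EdgesNondegenerate u) (p q : ℂ) (k l : ℤ) :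
    xx u p q k (l+1) = gg u k l * xx u p q k l := by
  unfold xx; rw [zprod_succ _ (fun m => gg_ne hu k m) l]; ring

lemma xx_f (hu : EdgesNondegenerate u) (hhex : HexagonCondition u) (p q : ℂ)
    (k l : ℤ) : xx u p q (k+1) l = ff u k l * xx u p q k l := by
  induction l using Int.induction_on with
  | zero =>
      unfold xx
      rw [zprod_zero, zprod_zero, zprod_succ _ (fun m => ff_ne hu m 0) k]; ring
  | succ i ih =>
      rw [xx_g hu p q (k+1) i, xx_g hu p q k i, ih]
      have hc := comm hu hhex k i
      linear_combination (-(xx u p q k (i:ℤ))) * hc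
  | pred i ih =>
      have g1 := xx_g hu p q (k+1) (-i-1)
      have g2 := xx_g hu p q k (-i-1)
      rw [show (-i:ℤ)-1+1 = -i from by ring] at g1 g2
      have hc := comm hu hhex k (-i-1)
      rw [show (-i:ℤ)-1+1 = -i from by ring] at hc
      apply mul_left_cancel₀ (gg_ne hu (k+1) (-i-1))
      rw [← g1, ih, g2]
      linear_combination xx u p q k (-i-1) * hc

lemma xx_ne (hu : EdgesNondegenerate u) {p q : ℂ} (hpq : p ≠ q) (k l : ℤ) :
    xx u p q k l ≠ 0 := by
  unfold xx
  refine mul_ne_zero (mul_ne_zero ?_ ?_) ?_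
  · exact div_ne_zero (mul_ne_zero (sub_ne_zero.2 (Ne.symm hpq)) (ee_ne hu _ _)) (dd_ne hu _ _)
  · exact zprod_ne_zero _ (fun m => ff_ne hu m 0) k
  · exact zprod_ne_zero _ (fun m => gg_ne hu k m) l

variable (u)

noncomputable def HH (p q : ℂ) (k l : ℤ) : ℂ :=
  xx u p q k l * dd u k l / ee u (k+1) l

noncomputable def EE (p q : ℂ) (k l : ℤ) : ℂ :=
  xx u p q k l * dd u k l / aa u k (l+1)

noncomputable def vv (p q : ℂ) (k l : ℤ) : ℂ :=
  p + zsum (fun j => HH u p q j 0) k + zsum (fun j => EE u p q k j) l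

variable {u}

lemma E_shift (hu : EdgesNondegenerate u) (hhex : HexagonCondition u)
    (p q : ℂ) (k l : ℤ) :
    EE u p q (k+1) l = -(aa u k l * xx u p q k l) / ee u (k+1) l := by
  unfold EE
  rw [xx_f hu hhex, ff]
  rw [div_mul_eq_mul_div, div_mul_eq_mul_div, div_div,
    div_eq_div_iff (mul_ne_zero (mul_ne_zero (dd_ne hu _ _) (ee_ne hu _ _))
      (aa_ne hu (k+1) (l+1))) (ee_ne hu _ _)]
  ring

lemma H_shift (hu : EdgesNondegenerate u) (hhex : HexagonCondition u)
    (p q : ℂ) (k l : ℤ) :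
    HH u p q k (l+1) = -(ee u k l * xx u p q k l) / aa u k (l+1) := by
  unfold HH
  rw [xx_g hu, gg]
  rw [div_mul_eq_mul_div, div_mul_eq_mul_div, div_div,
    div_eq_div_iff (mul_ne_zero (mul_ne_zero (dd_ne hu _ _) (aa_ne hu _ _))
      (ee_ne hu (k+1) (l+1))) (aa_ne hu _ _)]
  ring

lemma HE1 (hu : EdgesNondegenerate u) (hhex : HexagonCondition u)
    (p q : ℂ) (k l : ℤ) :
    HH u p q k l + EE u p q (k+1) l = xx u p q k l := by
  rw [E_shift hu hhex, HH]
  rw [div_add_div _ _ (ee_ne hu (k+1) l) (ee_ne hu (k+1) l),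
    div_eq_iff (mul_ne_zero (ee_ne hu (k+1) l) (ee_ne hu (k+1) l))]
  unfold aa ee dd
  ring

lemma HE2 (hu : EdgesNondegenerate u) (hhex : HexagonCondition u)
    (p q : ℂ) (k l : ℤ) :
    EE u p q k l + HH u p q k (l+1) = xx u p q k l := by
  rw [H_shift hu hhex, EE]
  rw [div_add_div _ _ (aa_ne hu k (l+1)) (aa_ne hu k (l+1)),
    div_eq_iff (mul_ne_zero (aa_ne hu k (l+1)) (aa_ne hu k (l+1)))]
  unfold aa ee dd
  ring

lemma dE (p q : ℂ) (k l : ℤ) :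
    vv u p q k (l+1) - vv u p q k l = EE u p q k l := by
  unfold vv; rw [zsum_succ]; ring

lemma dH (hu : EdgesNondegenerate u) (hhex : HexagonCondition u)
    (p q : ℂ) (k l : ℤ) :
    vv u p q (k+1) l - vv u p q k l = HH u p q k l := by
  induction l using Int.induction_on with
  | zero =>
      show vv u p q (k+1) 0 - vv u p q k 0 = HH u p q k 0
      unfold vv
      rw [zsum_succ (fun j => HH u p q j 0) k]
      simp [zsum_zero]
  | succ i ih =>
      have d1 := dE (u := u) p q (k+1) (i:ℤ)
      have d2 := dE (u := u) p q k (i:ℤ)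
      have he1 := HE1 hu hhex p q k (i:ℤ)
      have he2 := HE2 hu hhex p q k (i:ℤ)
      linear_combination d1 - d2 + ih + he1 - he2
  | pred i ih =>
      have d1 := dE (u := u) p q (k+1) (-(i:ℤ)-1)
      have d2 := dE (u := u) p q k (-(i:ℤ)-1)
      rw [show -(i:ℤ)-1+1 = -(i:ℤ) from by ring] at d1 d2
      have he1 := HE1 hu hhex p q k (-(i:ℤ)-1)
      have he2 := HE2 hu hhex p q k (-(i:ℤ)-1)
      rw [show -(i:ℤ)-1+1 = -(i:ℤ) from by ring] at he2
      linear_combination ih - d1 + d2 + he2 - he1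

lemma vv00 (p q : ℂ) : vv u p q 0 0 = p := by
  unfold vv; simp

lemma xx00 (p q : ℂ) : xx u p q 0 0 = x0 u p q := by
  unfold xx; simp

lemma vv10 (hu : EdgesNondegenerate u) (p q : ℂ) : vv u p q 1 0 = q := by
  unfold vv
  rw [show (1:ℤ) = 0+1 from by ring, zsum_succ, zsum_zero, zsum_zero]
  have : HH u p q 0 0 = q - p := by
    rw [HH, xx00, x0, show (0:ℤ)+1 = 1 from by ring]
    field_simp [ee_ne hu 1 0, dd_ne hu 0 0]
  rw [this]; ring

lemma diag (hu : EdgesNondegenerate u) (hhex : HexagonCondition u)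
    (p q : ℂ) (k l : ℤ) :
    vv u p q (k+1) (l+1) - vv u p q k l = xx u p q k l := by
  linear_combination dH hu hhex p q k l + dE (u := u) p q (k+1) l
    + HE1 hu hhex p q k l

lemma vv_rel (hu : EdgesNondegenerate u) (hhex : HexagonCondition u)
    (p q : ℂ) : FghRelations u (vv u p q) := by
  intro k l
  have hd := diag hu hhex p q k l
  have d2 := dE (u := u) p q (k+1) l
  have hE := E_shift hu hhex p q k l
  have hee : ee u (k+1) l * EE u p q (k+1) l = -(aa u k l * xx u p q k l) := by
    rw [hE, mul_div_assoc', mul_div_cancel_left₀ _ (ee_ne hu (k+1) l)]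
  have d0 := dE (u := u) p q k l
  have hE0 : aa u k (l+1) * EE u p q k l = xx u p q k l * dd u k l := by
    rw [EE, mul_div_assoc', mul_div_cancel_left₀ _ (aa_ne hu k (l+1))]
  constructor
  · have goal' : aa u k l * (vv u p q k l - vv u p q (k+1) (l+1))
        = ee u (k+1) l * (vv u p q (k+1) (l+1) - vv u p q (k+1) l) := by
      linear_combination (-(aa u k l)) * hd + (-(ee u (k+1) l)) * d2 + (-1) * hee
    simp only [aa, ee] at goal'
    exact goal'
  · have goal' : aa u k (l+1) * (vv u p q k (l+1) - vv u p q k l)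
        = -(dd u k l) * (vv u p q k l - vv u p q (k+1) (l+1)) := by
      linear_combination aa u k (l+1) * d0 + hE0 + (-(dd u k l)) * hd
    simp only [aa, dd] at goal'
    convert goal' using 2 <;> ring

lemma HH_ne (hu : EdgesNondegenerate u) {p q : ℂ} (hpq : p ≠ q) (k l : ℤ) :
    HH u p q k l ≠ 0 :=
  div_ne_zero (mul_ne_zero (xx_ne hu hpq k l) (dd_ne hu k l)) (ee_ne hu (k+1) l)

lemma EE_ne (hu : EdgesNondegenerate u) {p q : ℂ} (hpq : p ≠ q) (k l : ℤ) :
    EE u p q k l ≠ 0 :=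
  div_ne_zero (mul_ne_zero (xx_ne hu hpq k l) (dd_ne hu k l)) (aa_ne hu k (l+1))

lemma vv_nondeg (hu : EdgesNondegenerate u) (hhex : HexagonCondition u)
    {p q : ℂ} (hpq : p ≠ q) : EdgesNondegenerate (vv u p q) := by
  intro k l
  refine ⟨?_, ?_, ?_⟩
  · intro h
    exact HH_ne hu hpq k l (by rw [← dH hu hhex p q k l, h, sub_self])
  · intro h
    exact EE_ne hu hpq k l (by rw [← dE (u := u) p q k l, h, sub_self])
  · intro h
    exact xx_ne hu hpq k l (by rw [← diag hu hhex p q k l, h, sub_self])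

lemma vv_hex (hu : EdgesNondegenerate u) (hhex : HexagonCondition u)
    {p q : ℂ} (hpq : p ≠ q) : HexagonCondition (vv u p q) := by
  intro k l
  obtain ⟨K, rfl⟩ : ∃ K, k = K + 1 := ⟨k - 1, by ring⟩
  obtain ⟨L, rfl⟩ : ∃ L, l = L + 1 := ⟨l - 1, by ring⟩
  simp only [add_sub_cancel_right, multiRatio]
  -- six differences
  have c1 : vv u p q (K+1+1) (L+1) - vv u p q (K+1+1) (L+1+1)
      = -EE u p q (K+1+1) (L+1) := by
    linear_combination -(dE (u := u) p q (K+1+1) (L+1))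
  have c2 : vv u p q (K+1+1) (L+1+1) - vv u p q (K+1) (L+1+1)
      = HH u p q (K+1) (L+1+1) := dH hu hhex p q (K+1) (L+1+1)
  have c3 : vv u p q (K+1) (L+1+1) - vv u p q K (L+1)
      = xx u p q K (L+1) := diag hu hhex p q K (L+1)
  have c4 : vv u p q K (L+1) - vv u p q K L = EE u p q K L :=
    dE (u := u) p q K L
  have c5 : vv u p q K L - vv u p q (K+1) L = -HH u p q K L := by
    linear_combination -(dH hu hhex p q K L)
  have c6 : vv u p q (K+1) L - vv u p q (K+1+1) (L+1) = -xx u p q (K+1) L := by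
    linear_combination -(diag hu hhex p q (K+1) L)
  rw [c1, c2, c3, c4, c5, c6]
  have hne : HH u p q (K+1) (L+1+1) * EE u p q K L * (-xx u p q (K+1) L) ≠ 0 :=
    mul_ne_zero (mul_ne_zero (HH_ne hu hpq _ _) (EE_ne hu hpq _ _))
      (neg_ne_zero.2 (xx_ne hu hpq _ _))
  rw [div_eq_iff hne]
  rw [E_shift hu hhex p q (K+1) (L+1), H_shift hu hhex p q (K+1) (L+1)]
  simp only [HH, EE]
  rw [xx_f hu hhex p q K (L+1), xx_f hu hhex p q K L, xx_g hu p q K L]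
  simp only [ff, gg]
  have hx := hexId hu hhex K L
  rw [show K+2 = K+1+1 from by ring, show L+2 = L+1+1 from by ring] at hx
  field_simp [aa_ne hu, ee_ne hu, dd_ne hu, xx_ne hu hpq]
  linear_combination -hx

section Unique

variable {w : ℤ → ℤ → ℂ}

-- cleared-form consequences of the relations for an arbitrary solution w
lemma uV (hw : FghRelations u w) (k l : ℤ) :
    ee u (k+1) l * (w (k+1) (l+1) - w (k+1) l)
      = -(aa u k l) * (w (k+1) (l+1) - w k l) := by
  have h := (hw k l).1
  simp only [aa, ee]
  linear_combination -h

lemma uB (hw : FghRelations u w) (k l : ℤ) :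
    aa u k (l+1) * (w k (l+1) - w k l)
      = dd u k l * (w (k+1) (l+1) - w k l) := by
  have h := (hw k l).2
  simp only [aa, dd]
  linear_combination h

lemma uH (hw : FghRelations u w) (k l : ℤ) :
    ee u (k+1) l * (w (k+1) l - w k l)
      = dd u k l * (w (k+1) (l+1) - w k l) := by
  have h := uV hw k l
  simp only [aa, ee, dd] at h ⊢
  linear_combination -h

lemma uTop (hw : FghRelations u w) (k l : ℤ) :
    aa u k (l+1) * (w (k+1) (l+1) - w k (l+1))
      = -(ee u k l) * (w (k+1) (l+1) - w k l) := by
  have h := uB hw k l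
  simp only [aa, ee, dd] at h ⊢
  linear_combination -h

lemma yV (hu : EdgesNondegenerate u) (hw : FghRelations u w) (k l : ℤ) :
    w (k+1+1) (l+1) - w (k+1) l
      = ff u k l * (w (k+1) (l+1) - w k l) := by
  have h1 := uV hw k l
  have h2 := uB hw (k+1) l
  rw [ff, div_mul_eq_mul_div, eq_div_iff
    (mul_ne_zero (dd_ne hu (k+1) l) (ee_ne hu (k+1) l))]
  linear_combination (-(ee u (k+1) l)) * h2 + aa u (k+1) (l+1) * h1

lemma yH (hu : EdgesNondegenerate u) (hw : FghRelations u w) (k l : ℤ) :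
    w (k+1) (l+1+1) - w k (l+1)
      = gg u k l * (w (k+1) (l+1) - w k l) := by
  have h1 := uTop hw k l
  have h2 := uH hw k (l+1)
  rw [gg, div_mul_eq_mul_div, eq_div_iff
    (mul_ne_zero (dd_ne hu k (l+1)) (aa_ne hu k (l+1)))]
  linear_combination (-(aa u k (l+1))) * h2 + ee u (k+1) (l+1) * h1

lemma y_eq_x (hu : EdgesNondegenerate u) (hhex : HexagonCondition u)
    {p q : ℂ} (hw : FghRelations u w) (h0 : w 0 0 = p) (h1 : w 1 0 = q) :
    ∀ k l : ℤ, w (k+1) (l+1) - w k l = xx u p q k l := by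
  have base : ∀ k : ℤ, w (k+1) 1 - w k 0 = xx u p q k 0 := by
    intro k
    induction k using Int.induction_on with
    | zero =>
        have h := uH hw 0 0
        rw [show (0:ℤ)+1 = 1 from by ring, h0, h1] at h
        rw [show (0:ℤ)+1 = 1 from by ring, xx00, x0]
        rw [eq_div_iff (dd_ne hu 0 0)]
        linear_combination -h - dd u 0 0 * h0
    | succ i ih =>
        have h := yV hu hw (i:ℤ) 0
        rw [show ((0:ℤ)+1) = 1 from by ring] at h
        rw [h, ih, xx_f hu hhex p q (i:ℤ) 0]
    | pred i ih =>
        have h := yV hu hw (-(i:ℤ)-1) 0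
        rw [show (-(i:ℤ)-1+1) = -(i:ℤ) from by ring,
          show ((0:ℤ)+1) = 1 from by ring] at h
        have hx := xx_f hu hhex p q (-(i:ℤ)-1) 0
        rw [show (-(i:ℤ)-1+1) = -(i:ℤ) from by ring] at hx
        rw [show (-(i:ℤ)-1+1) = -(i:ℤ) from by ring]
        apply mul_left_cancel₀ (ff_ne hu (-(i:ℤ)-1) 0)
        rw [← h, ih, hx]
  intro k l
  induction l using Int.induction_on with
  | zero =>
      have := base k
      rw [show ((0:ℤ)+1) = 1 from by ring]
      exact this
  | succ i ih =>
      have h := yH hu hw k (i:ℤ)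
      rw [h, ih, xx_g hu p q k (i:ℤ)]
  | pred i ih =>
      have h := yH hu hw k (-(i:ℤ)-1)
      rw [show (-(i:ℤ)-1+1) = -(i:ℤ) from by ring] at h
      have hx := xx_g hu p q k (-(i:ℤ)-1)
      rw [show (-(i:ℤ)-1+1) = -(i:ℤ) from by ring] at hx
      rw [show (-(i:ℤ)-1+1) = -(i:ℤ) from by ring]
      apply mul_left_cancel₀ (gg_ne hu k (-(i:ℤ)-1))
      rw [← h, ih, hx]

lemma w_eq_vv (hu : EdgesNondegenerate u) (hhex : HexagonCondition u)
    {p q : ℂ} (hw : FghRelations u w) (h0 : w 0 0 = p) (h1 : w 1 0 = q) :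
    w = vv u p q := by
  have hy := y_eq_x hu hhex hw h0 h1
  -- increments agree
  have hrow : ∀ k l : ℤ, w (k+1) l - w k l = HH u p q k l := by
    intro k l
    have h := uH hw k l
    rw [hy k l] at h
    rw [HH, eq_div_iff (ee_ne hu (k+1) l)]
    linear_combination h
  have hcol : ∀ k l : ℤ, w k (l+1) - w k l = EE u p q k l := by
    intro k l
    have h := uB hw k l
    rw [hy k l] at h
    rw [EE, eq_div_iff (aa_ne hu k (l+1))]
    linear_combination h
  funext k l
  have hrow0 : ∀ k : ℤ, w k 0 = vv u p q k 0 := by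
    intro k
    induction k using Int.induction_on with
    | zero => rw [vv00, h0]
    | succ i ih =>
        have := hrow (i:ℤ) 0
        have h2 := dH hu hhex p q (i:ℤ) 0
        linear_combination this - h2 + ih
    | pred i ih =>
        have := hrow (-(i:ℤ)-1) 0
        have h2 := dH hu hhex p q (-(i:ℤ)-1) 0
        rw [show (-(i:ℤ)-1+1) = -(i:ℤ) from by ring] at this h2
        linear_combination h2 - this + ih
  induction l using Int.induction_on with
  | zero => exact hrow0 k
  | succ i ih =>
      have := hcol k (i:ℤ)
      have h2 := dE (u := u) p q k (i:ℤ)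
      linear_combination this - h2 + ih
  | pred i ih =>
      have := hcol k (-(i:ℤ)-1)
      have h2 := dE (u := u) p q k (-(i:ℤ)-1)
      rw [show (-(i:ℤ)-1+1) = -(i:ℤ) from by ring] at this h2
      linear_combination h2 - this + ih

end Unique

end FghAux

/-- Given a nondegenerate lattice `u` satisfying the hexagon condition
`MR = -1`, for any prescribed values at `(0,0)` and `(1,0)` there is exactly
one companion lattice `v`; and if the two prescribed values differ, `v` is
again nondegenerate and satisfies the hexagon condition. -/
theorem fgh_companion_lattice
    (u : ℤ → ℤ → ℂ)
    (hu : EdgesNondegenerate u)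
    (hhex : HexagonCondition u) :
    ∀ p q : ℂ,
      (∃! v : ℤ → ℤ → ℂ, v 0 0 = p ∧ v 1 0 = q ∧ FghRelations u v) ∧
      (p ≠ q → ∀ v : ℤ → ℤ → ℂ,
        (v 0 0 = p ∧ v 1 0 = q ∧ FghRelations u v) →
          EdgesNondegenerate v ∧ HexagonCondition v) := by
  intro p q
  constructor
  · refine ⟨FghAux.vv u p q, ⟨FghAux.vv00 p q, FghAux.vv10 hu p q,
      FghAux.vv_rel hu hhex p q⟩, ?_⟩
    rintro w ⟨h0, h1, hw⟩
    exact FghAux.w_eq_vv hu hhex hw h0 h1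
  · rintro hpq v ⟨h0, h1, hv⟩
    rw [FghAux.w_eq_vv hu hhex hv h0 h1]
    exact ⟨FghAux.vv_nondeg hu hhex hpq, FghAux.vv_hex hu hhex hpq⟩
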